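/- There exists a 3-state, 2-action MDP with rewards in [0,1] and a model-similarity abstraction of parameter η ∈ (0,1) (aggregating two of the states) such that the lifted optimal abstract policy π_GA is not ε-optimal in the ground MDP for ε = η/(1-γ): specifically, in the ground MDP the gap V*_G(s₀) - V^{π_GA}_G(s₀) = η/(1-γ) > 0. -/

import Mathlib

set_option maxHeartbeats 2000000 in
/-- There exists a 3-state, 2-action MDP with rewards in `[0,1]` and a
model-similarity abstraction of parameter `η` (aggregating two of the states)
such that the lifted optimal abstract policy is not `ε`-optimal in the ground
MDP for `ε = η/(1-γ)`: the value gap at the initial state is exactly `η/(1-γ) > 0`. -/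
theorem lifted_abstract_policy_not_eps_optimal
    (η γ : ℝ) (hη0 : 0 < η) (hη1 : η < 1) (hγ0 : 0 < γ) (hγ1 : γ < 1) :
    ∃ (RG : Fin 3 → Fin 2 → ℝ) (TG : Fin 3 → Fin 2 → Fin 3 → ℝ)
      (φ : Fin 3 → Fin 2) (RA : Fin 2 → Fin 2 → ℝ) (TA : Fin 2 → Fin 2 → Fin 2 → ℝ)
      (QG : Fin 3 → Fin 2 → ℝ) (QA : Fin 2 → Fin 2 → ℝ)
      (piA : Fin 2 → Fin 2) (VGA : Fin 3 → ℝ),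
      -- a valid ground MDP with rewards in [0,1]
      (∀ s a, RG s a ∈ Set.Icc (0:ℝ) 1) ∧
      (∀ s a s', 0 ≤ TG s a s') ∧ (∀ s a, ∑ s', TG s a s' = 1) ∧
      -- a valid abstract MDP
      (∀ s a s', 0 ≤ TA s a s') ∧ (∀ s a, ∑ s', TA s a s' = 1) ∧
      -- model-similarity abstraction of parameter η
      (∀ s a, |RG s a - RA (φ s) a| ≤ η) ∧
      (∀ s a sb', |TA (φ s) a sb' -
        ∑ g ∈ Finset.univ.filter (fun g => φ g = sb'), TG s a g| ≤ η) ∧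
      -- two of the ground states are aggregated
      (¬ Function.Injective φ) ∧
      -- Bellman optimality equations for ground and abstract MDPs
      (∀ s a, QG s a = RG s a + γ *
        ∑ s', TG s a s' * (Finset.univ.sup' Finset.univ_nonempty fun a' => QG s' a')) ∧
      (∀ sb a, QA sb a = RA sb a + γ *
        ∑ sb', TA sb a sb' * (Finset.univ.sup' Finset.univ_nonempty fun a' => QA sb' a')) ∧
      -- piA is the optimal abstract policy
      (∀ sb, QA sb (piA sb) = Finset.univ.sup' Finset.univ_nonempty fun a => QA sb a) ∧
      -- VGA is the ground value of the lifted policy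
      (∀ s, VGA s = RG s (piA (φ s)) + γ * ∑ s', TG s (piA (φ s)) s' * VGA s') ∧
      -- the suboptimality gap at s₀ is exactly η/(1-γ) > 0
      ((Finset.univ.sup' Finset.univ_nonempty fun a => QG 0 a) - VGA 0 = η / (1 - γ)) ∧
      0 < η / (1 - γ) := by
  have hA : (0:ℝ) < 1 - γ := by linarith
  have hB : (0:ℝ) < 1 - γ + γ * η := by nlinarith
  have hC : (0:ℝ) < 1 - γ + γ * η / 2 := by nlinarith
  have hsup2 : ∀ f : Fin 2 → ℝ,
      Finset.univ.sup' Finset.univ_nonempty f = max (f 0) (f 1) := by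
    intro f
    apply le_antisymm
    · exact Finset.sup'_le _ _ fun i _ => by
        fin_cases i
        · exact le_max_left _ _
        · exact le_max_right _ _
    · exact max_le (Finset.le_sup' f (Finset.mem_univ 0))
        (Finset.le_sup' f (Finset.mem_univ 1))
  have hm0 : max (γ*η/(1-γ)) (η/(1-γ)) = η/(1-γ) := by
    apply max_eq_right; gcongr; nlinarith
  have hq10pos : (0:ℝ) ≤ η/((1-γ)*(1-γ+γ*η)) := by positivity
  have hm1 : max (η/((1-γ)*(1-γ+γ*η))) (γ*(η/((1-γ)*(1-γ+γ*η))))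
      = η/((1-γ)*(1-γ+γ*η)) := by
    apply max_eq_left; nlinarith
  have hma0 : max (η/(2*(1-γ)*(1-γ+γ*η/2))) (η/2 + γ*(η/(2*(1-γ)*(1-γ+γ*η/2))))
      = η/(2*(1-γ)*(1-γ+γ*η/2)) := by
    apply max_eq_left
    have e1 : (1-γ) * (η/(2*(1-γ)*(1-γ+γ*η/2))) = η/(2*(1-γ+γ*η/2)) := by
      field_simp
    have e2 : η/2 ≤ η/(2*(1-γ+γ*η/2)) := by
      rw [div_le_div_iff₀ (by norm_num) (by positivity)]
      nlinarith [mul_nonneg hη0.le (mul_nonneg hγ0.le (by linarith : (0:ℝ) ≤ 1 - η/2))]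
    nlinarith [e1, e2]
  refine ⟨![![0, η], ![η, 0], ![1, 1]],
    ![![![1,0,0], ![1,0,0]], ![![0,1-η,η], ![0,1,0]], ![![0,0,1], ![0,0,1]]],
    ![0, 0, 1],
    ![![η/2, η/2], ![1, 1]],
    ![![![1-η/2, η/2], ![1, 0]], ![![0,1], ![0,1]]],
    ![![γ*η/(1-γ), η/(1-γ)],
      ![η/((1-γ)*(1-γ+γ*η)), γ*(η/((1-γ)*(1-γ+γ*η)))],
      ![1/(1-γ), 1/(1-γ)]],
    ![![η/(2*(1-γ)*(1-γ+γ*η/2)), η/2 + γ*(η/(2*(1-γ)*(1-γ+γ*η/2)))],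
      ![1/(1-γ), 1/(1-γ)]],
    ![0, 0],
    ![0, η/((1-γ)*(1-γ+γ*η)), 1/(1-γ)],
    ?_, ?_, ?_, ?_, ?_, ?_, ?_, ?_, ?_, ?_, ?_, ?_, ?_, ?_⟩
  · intro s a; fin_cases s <;> fin_cases a <;>
      simp [Set.mem_Icc] <;> constructor <;> linarith
  · intro s a s'; fin_cases s <;> fin_cases a <;> fin_cases s' <;>
      norm_num [Matrix.cons_val_zero, Matrix.cons_val_one, Matrix.head_cons,
        Matrix.cons_val_two, Matrix.tail_cons] <;> linarith
  · intro s a; fin_cases s <;> fin_cases a <;>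
      norm_num [Fin.sum_univ_three, Matrix.cons_val_zero, Matrix.cons_val_one,
        Matrix.head_cons, Matrix.cons_val_two, Matrix.tail_cons]
  · intro s a s'; fin_cases s <;> fin_cases a <;> fin_cases s' <;>
      norm_num [Matrix.cons_val_zero, Matrix.cons_val_one, Matrix.head_cons] <;> linarith
  · intro s a; fin_cases s <;> fin_cases a <;>
      norm_num [Fin.sum_univ_two, Matrix.cons_val_zero, Matrix.cons_val_one,
        Matrix.head_cons]
  · intro s a
    rw [abs_le]
    constructor <;> fin_cases s <;> fin_cases a <;>
      norm_num [Matrix.cons_val_zero, Matrix.cons_val_one, Matrix.head_cons,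
        Matrix.cons_val_two, Matrix.tail_cons] <;> linarith
  · intro s a sb'
    rw [abs_le]
    constructor <;> fin_cases s <;> fin_cases a <;> fin_cases sb' <;>
      norm_num [Finset.sum_filter, Fin.sum_univ_three, Matrix.cons_val_zero,
        Matrix.cons_val_one, Matrix.head_cons, Matrix.cons_val_two, Matrix.tail_cons] <;>
      linarith
  · intro h
    have h01 : (![0, 0, 1] : Fin 3 → Fin 2) 0 = ![0, 0, 1] 1 := rfl
    have := h h01
    simp at this
  · intro s a
    fin_cases s <;> fin_cases a <;>
      simp only [hsup2, Fin.sum_univ_three, Matrix.cons_val_zero, Matrix.cons_val_one,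
        Matrix.head_cons, Matrix.cons_val_two, Matrix.tail_cons, Fin.isValue, Fin.reduceFinMk,
        hm0, hm1, max_self] <;>
      field_simp <;> ring
  · intro sb a
    fin_cases sb <;> fin_cases a <;>
      simp only [hsup2, Fin.sum_univ_two, Matrix.cons_val_zero, Matrix.cons_val_one,
        Matrix.head_cons, Fin.isValue, Fin.reduceFinMk, hma0, max_self] <;>
      field_simp <;> ring
  · intro sb
    fin_cases sb <;>
      simp [hsup2, hma0]
  · intro s
    fin_cases s <;>
      simp only [Fin.sum_univ_three, Matrix.cons_val_zero, Matrix.cons_val_one,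
        Matrix.head_cons, Matrix.cons_val_two, Matrix.tail_cons, Fin.isValue, Fin.reduceFinMk] <;>
      field_simp <;> ring
  · simp only [hsup2, Matrix.cons_val_zero, Matrix.cons_val_one, Matrix.head_cons,
      Fin.isValue, hm0]
    ring
  · positivity
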